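/- Let z_1,…,z_n and Z_1,…,Z_n be vectors in ℝ^r such that the z_i span ℝ^r and, for every r-tuple of indices, ⟨z_{i_1} ⋯ z_{i_r}⟩ and ⟨Z_{i_1} ⋯ Z_{i_r}⟩ have the same sign. Then for any positive scalars c_1,…,c_n > 0, the determinant of the matrix Σ_{i=1}^n c_i z_i Z_iᵀ is strictly positive. -/

import Mathlib

open scoped BigOperators
open scoped Matrix

private lemma sign_pair_pos {x y : ℝ} (h : Real.sign x = Real.sign y) (hx : x ≠ 0) :
    0 < x * y := by
  rcases hx.lt_or_gt with hx | hx
  · have hy : y < 0 := by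
      rcases lt_trichotomy y 0 with h' | h' | h'
      · exact h'
      · rw [Real.sign_of_neg hx, h', Real.sign_zero] at h; norm_num at h
      · rw [Real.sign_of_neg hx, Real.sign_of_pos h'] at h; norm_num at h
    exact mul_pos_of_neg_of_neg hx hy
  · have hy : 0 < y := by
      rcases lt_trichotomy y 0 with h' | h' | h'
      · rw [Real.sign_of_pos hx, Real.sign_of_neg h'] at h; norm_num at h
      · rw [Real.sign_of_pos hx, h', Real.sign_zero] at h; norm_num at h
      · exact h'
    exact mul_pos hx hy

private lemma sign_pair_nonneg {x y : ℝ} (h : Real.sign x = Real.sign y) :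
    0 ≤ x * y := by
  by_cases hx : x = 0
  · simp [hx]
  · exact (sign_pair_pos h hx).le

/-- Multilinear expansion of the determinant of `∑ i, c i • z i Z iᵀ`. -/
private lemma det_expansion (r n : ℕ) (z Z : Fin n → Fin r → ℝ) (c : Fin n → ℝ) :
    Matrix.det (Matrix.of fun a b : Fin r => ∑ i, c i * z i a * Z i b) =
      ∑ f : Fin r → Fin n, (∏ b, c (f b) * Z (f b) b) *
        Matrix.det (Matrix.of fun a b => z (f b) a) := by
  classical
  rw [← Matrix.det_transpose]
  have h1 : (Matrix.of fun a b : Fin r => ∑ i, c i * z i a * Z i b)ᵀ =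
      fun b : Fin r => ∑ i, (c i * Z i b) • z i := by
    funext b a
    simp only [Matrix.transpose_apply, Matrix.of_apply, Finset.sum_apply, Pi.smul_apply,
      smul_eq_mul]
    exact Finset.sum_congr rfl fun i _ => by ring
  rw [Matrix.det]
  rw [h1]
  have h2 := (Matrix.detRowAlternating (R := ℝ) (n := Fin r)).toMultilinearMap.map_sum
    (α := fun _ : Fin r => Fin n) (g := fun b i => (c i * Z i b) • z i)
  simp only [AlternatingMap.coe_multilinearMap] at h2
  rw [h2]
  refine Finset.sum_congr rfl fun f _ => ?_
  have h3 := (Matrix.detRowAlternating (R := ℝ) (n := Fin r)).toMultilinearMap.map_smul_univ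
    (fun b => c (f b) * Z (f b) b) (fun b => z (f b))
  simp only [AlternatingMap.coe_multilinearMap] at h3
  rw [h3, smul_eq_mul]
  congr 1
  rw [← Matrix.det_transpose (Matrix.of fun a b => z (f b) a)]
  rfl

/-- Symmetrized (Cauchy–Binet style) expansion. -/
private lemma det_symmetrized (r n : ℕ) (z Z : Fin n → Fin r → ℝ) (c : Fin n → ℝ) :
    ((Nat.factorial r : ℕ) : ℝ) * Matrix.det (Matrix.of fun a b : Fin r => ∑ i, c i * z i a * Z i b) =
      ∑ f : Fin r → Fin n, (∏ b, c (f b)) *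
        (Matrix.det (Matrix.of fun a b => z (f b) a) *
         Matrix.det (Matrix.of fun a b => Z (f b) a)) := by
  classical
  have hDZ : ∀ f : Fin r → Fin n,
      Matrix.det (Matrix.of fun a b => Z (f b) a) =
        ∑ σ : Equiv.Perm (Fin r), ((Equiv.Perm.sign σ : ℤ) : ℝ) * ∏ i, Z (f i) (σ i) := by
    intro f
    rw [Matrix.det_apply]
    refine Finset.sum_congr rfl fun σ _ => ?_
    rw [Units.smul_def, zsmul_eq_mul]
    norm_num
  symm
  calc ∑ f : Fin r → Fin n, (∏ b, c (f b)) *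
        (Matrix.det (Matrix.of fun a b => z (f b) a) *
         Matrix.det (Matrix.of fun a b => Z (f b) a))
      = ∑ f : Fin r → Fin n, ∑ σ : Equiv.Perm (Fin r),
          (∏ b, c (f b)) * Matrix.det (Matrix.of fun a b => z (f b) a) *
          (((Equiv.Perm.sign σ : ℤ) : ℝ) * ∏ i, Z (f i) (σ i)) := by
        refine Finset.sum_congr rfl fun f _ => ?_
        rw [hDZ f, Finset.mul_sum, Finset.mul_sum]
        refine Finset.sum_congr rfl fun σ _ => ?_
        ring
    _ = ∑ σ : Equiv.Perm (Fin r), ∑ f : Fin r → Fin n,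
          (∏ b, c (f b)) * Matrix.det (Matrix.of fun a b => z (f b) a) *
          (((Equiv.Perm.sign σ : ℤ) : ℝ) * ∏ i, Z (f i) (σ i)) :=
        Finset.sum_comm
    _ = ∑ σ : Equiv.Perm (Fin r), ∑ f : Fin r → Fin n,
          (∏ b, c (f b) * Z (f b) b) * Matrix.det (Matrix.of fun a b => z (f b) a) := by
        refine Finset.sum_congr rfl fun σ _ => ?_
        -- reindex f ↦ f ∘ σ.symm
        have hbij : Function.Bijective
            (fun f : Fin r → Fin n => f ∘ σ.symm) := by
          constructor
          · intro f g h
            funext i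
            have := congrFun h (σ i)
            simpa using this
          · intro f
            exact ⟨f ∘ σ, by funext i; simp⟩
        rw [← Function.Bijective.sum_comp hbij
          (fun f => (∏ b, c (f b) * Z (f b) b) * Matrix.det (Matrix.of fun a b => z (f b) a))]
        refine Finset.sum_congr rfl fun f _ => ?_
        have hc1 : (∏ b, c ((f ∘ σ.symm) b)) = ∏ b, c (f b) :=
          Equiv.prod_comp σ.symm (fun b => c (f b))
        have hZ1 : (∏ b, Z ((f ∘ σ.symm) b) b) = ∏ i, Z (f i) (σ i) := by
          rw [← Equiv.prod_comp σ (fun b => Z ((f ∘ σ.symm) b) b)]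
          refine Finset.prod_congr rfl fun i _ => ?_
          simp
        have hdet : Matrix.det (Matrix.of fun a b => z ((f ∘ σ.symm) b) a) =
            ((Equiv.Perm.sign σ : ℤ) : ℝ) * Matrix.det (Matrix.of fun a b => z (f b) a) := by
          have h4 : (Matrix.of fun a b => z ((f ∘ σ.symm) b) a) =
              (Matrix.of fun a b => z (f b) a).submatrix id σ.symm := by
            ext a b; rfl
          have h5 : Equiv.Perm.sign σ.symm = Equiv.Perm.sign σ := Equiv.Perm.sign_symm σ
          rw [h4, Matrix.det_permute', h5]
        rw [Finset.prod_mul_distrib, hdet, hc1, hZ1]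
        ring
    _ = ∑ _σ : Equiv.Perm (Fin r),
          Matrix.det (Matrix.of fun a b : Fin r => ∑ i, c i * z i a * Z i b) := by
        refine Finset.sum_congr rfl fun σ _ => ?_
        rw [det_expansion]
    _ = ((Nat.factorial r : ℕ) : ℝ) * Matrix.det (Matrix.of fun a b : Fin r => ∑ i, c i * z i a * Z i b) := by
        rw [Finset.sum_const, Finset.card_univ, Fintype.card_perm, Fintype.card_fin,
          nsmul_eq_mul]

/-- **Positivity of the Jacobian.**
If `z` spans `ℝ^r` and all `r × r` determinants of `z` and `Z` have the same sign, then
for positive scalars `c i` the determinant of `∑ i, c i • z i Z iᵀ` is strictly positive. -/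
theorem stmt_4 (r n : ℕ) (z Z : Fin n → Fin r → ℝ)
    (hzspan : Submodule.span ℝ (Set.range z) = ⊤)
    (hsign : ∀ f : Fin r → Fin n,
      Real.sign (Matrix.det (Matrix.of fun a b => z (f b) a)) =
      Real.sign (Matrix.det (Matrix.of fun a b => Z (f b) a)))
    (c : Fin n → ℝ) (hc : ∀ i, 0 < c i) :
    0 < Matrix.det (Matrix.of fun a b : Fin r => ∑ i, c i * z i a * Z i b) := by
  classical
  -- find f₀ with nonzero z-minor
  obtain ⟨b, hb_sub, hb_span, hb_li⟩ := exists_linearIndependent ℝ (Set.range z)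
  rw [hzspan] at hb_span
  let B : Module.Basis b ℝ (Fin r → ℝ) := Module.Basis.mk hb_li (by rw [Subtype.range_coe, hb_span])
  haveI : Fintype b := FiniteDimensional.fintypeBasisIndex B
  have hcard : Fintype.card b = r := by
    have h1 := Module.finrank_eq_card_basis B
    rw [Module.finrank_pi, Fintype.card_fin] at h1; exact h1.symm
  let e : Fin r ≃ b := (Fintype.equivFinOfCardEq hcard).symm
  have hchoice : ∀ j : Fin r, ∃ i : Fin n, z i = (e j : Fin r → ℝ) := fun j => hb_sub (e j).2
  choose f₀ hf₀ using hchoice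
  have hli : LinearIndependent ℝ (fun j : Fin r => z (f₀ j)) := by
    have : (fun j : Fin r => z (f₀ j)) = (fun x : b => (x : Fin r → ℝ)) ∘ e := by
      funext j; exact hf₀ j
    rw [this]
    exact hb_li.comp e e.injective
  have hdetz : Matrix.det (Matrix.of fun a b => z (f₀ b) a) ≠ 0 := by
    have hA : LinearIndependent ℝ
        (fun i => (Matrix.of fun a b => z (f₀ b) a)ᵀ i) := by
      have : (fun i => (Matrix.of fun a b => z (f₀ b) a)ᵀ i) = fun j : Fin r => z (f₀ j) := by
        funext i; rfl
      rw [this]; exact hli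
    have := (Matrix.linearIndependent_cols_iff_isUnit (K := ℝ)).mp hA
    rw [Matrix.isUnit_iff_isUnit_det, isUnit_iff_ne_zero] at this
    exact this
  -- positivity of the symmetrized sum
  have key := det_symmetrized r n z Z c
  have hpos : 0 < ∑ f : Fin r → Fin n, (∏ b, c (f b)) *
      (Matrix.det (Matrix.of fun a b => z (f b) a) *
       Matrix.det (Matrix.of fun a b => Z (f b) a)) := by
    refine Finset.sum_pos' (fun f _ => ?_) ⟨f₀, Finset.mem_univ _, ?_⟩
    · exact mul_nonneg (Finset.prod_nonneg fun i _ => (hc _).le)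
        (sign_pair_nonneg (hsign f))
    · exact mul_pos (Finset.prod_pos fun i _ => hc _)
        (sign_pair_pos (hsign f₀) hdetz)
  rw [← key] at hpos
  have hfac : (0 : ℝ) < ((Nat.factorial r : ℕ) : ℝ) := by
    exact_mod_cast Nat.factorial_pos r
  nlinarith [hpos, hfac]
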